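/- Define x_n = (1/n, 1/n², 0) and y_n = (1/n, 1/n², 1/n) in ℝ³ for n ∈ ℕ, n ≥ 1. Then none of the points x_n, y_n lies in the closed convex hull of the remaining points {x_j, y_j : j ≠ n} ∪ ({x_n, y_n} minus the given point). Moreover, for each n the four points x_n, y_n, x_{n+1}, y_{n+1} lie in a common plane H_n, and all points x_j, y_j with j ∉ {n, n+1} lie in the open halfspace bounded by H_n containing the origin. -/

import Mathlib

noncomputable section

/-- The point `x_n = (1/n, 1/n², 0)`. -/
def ptx (n : ℕ) : EuclideanSpace ℝ (Fin 3) :=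
  WithLp.toLp 2 ![1 / (n : ℝ), 1 / (n : ℝ) ^ 2, 0]

/-- The point `y_n = (1/n, 1/n², 1/n)`. -/
def pty (n : ℕ) : EuclideanSpace ℝ (Fin 3) :=
  WithLp.toLp 2 ![1 / (n : ℝ), 1 / (n : ℝ) ^ 2, 1 / (n : ℝ)]

/-- All points `x_j, y_j`, `j ≥ 1`. -/
def allPts : Set (EuclideanSpace ℝ (Fin 3)) :=
  ⋃ j ∈ {j : ℕ | 1 ≤ j}, {ptx j, pty j}

/-- Auxiliary constructor for elements of `EuclideanSpace ℝ (Fin 3)`. -/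
def vec3 (a b c : ℝ) : EuclideanSpace ℝ (Fin 3) := WithLp.toLp 2 ![a,b,c]

lemma inner3 (a b c d e f : ℝ) :
    (inner ℝ (vec3 a b c) (vec3 d e f) : ℝ) = a*d + b*e + c*f := by
  simp [vec3, PiLp.inner_apply, PiLp.toLp_apply, RCLike.inner_apply, Fin.sum_univ_three]
  ring

lemma ptx_eq (j : ℕ) : ptx j = vec3 (1/(j:ℝ)) ((1/(j:ℝ))^2) 0 := by
  have : (1/(j:ℝ))^2 = 1/(j:ℝ)^2 := by ring
  rw [this]; rfl

lemma pty_eq (j : ℕ) : pty j = vec3 (1/(j:ℝ)) ((1/(j:ℝ))^2) (1/(j:ℝ)) := by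
  have : (1/(j:ℝ))^2 = 1/(j:ℝ)^2 := by ring
  rw [this]; rfl

lemma sep (S : Set (EuclideanSpace ℝ (Fin 3))) (p u : EuclideanSpace ℝ (Fin 3)) (c : ℝ)
    (hS : ∀ q ∈ S, (inner ℝ u q : ℝ) ≤ c) (hp : c < (inner ℝ u p : ℝ)) :
    p ∉ closure (convexHull ℝ S) := by
  intro hmem
  have hconv : Convex ℝ {q : EuclideanSpace ℝ (Fin 3) | (inner ℝ u q : ℝ) ≤ c} :=
    convex_halfSpace_le ⟨fun x y => inner_add_right u x y, fun r x => real_inner_smul_right u x r⟩ c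
  have hsub : closure (convexHull ℝ S) ⊆ {q | (inner ℝ u q : ℝ) ≤ c} :=
    closure_minimal (convexHull_min hS hconv)
      (isClosed_le (Continuous.inner continuous_const continuous_id) continuous_const)
  exact absurd (hsub hmem) (not_le.2 hp)

lemma gap_sq (n j : ℕ) (hn : 1 ≤ n) (hj : 1 ≤ j) (hne : j ≠ n) :
    (1 / ((n:ℝ) * ((n:ℝ)+1)))^2 ≤ (1/(j:ℝ) - 1/(n:ℝ))^2 := by
  have hN : (0:ℝ) < n := by exact_mod_cast hn
  have hJ : (0:ℝ) < j := by exact_mod_cast hj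
  rcases lt_or_gt_of_ne hne with h | h
  · have hc : (j:ℝ) + 1 ≤ n := by exact_mod_cast h
    have h1 : 1/(n:ℝ) ≤ 1/((j:ℝ)+1) := one_div_le_one_div_of_le (by linarith) hc
    have h2 : 1/(j:ℝ) - 1/((j:ℝ)+1) = 1/((j:ℝ)*((j:ℝ)+1)) := by field_simp; ring
    have h3 : 1/((n:ℝ)*((n:ℝ)+1)) ≤ 1/((j:ℝ)*((j:ℝ)+1)) :=
      one_div_le_one_div_of_le (by positivity) (by nlinarith)
    have key : 1/((n:ℝ)*((n:ℝ)+1)) ≤ 1/(j:ℝ) - 1/(n:ℝ) := by linarith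
    exact pow_le_pow_left₀ (by positivity) key 2
  · have hc : (n:ℝ) + 1 ≤ j := by exact_mod_cast h
    have h1 : 1/(j:ℝ) ≤ 1/((n:ℝ)+1) := one_div_le_one_div_of_le (by linarith) hc
    have h2 : 1/(n:ℝ) - 1/((n:ℝ)+1) = 1/((n:ℝ)*((n:ℝ)+1)) := by field_simp; ring
    have key : 1/((n:ℝ)*((n:ℝ)+1)) ≤ 1/(n:ℝ) - 1/(j:ℝ) := by linarith
    have hsq : (1/(j:ℝ) - 1/(n:ℝ))^2 = (1/(n:ℝ) - 1/(j:ℝ))^2 := by ring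
    rw [hsq]
    exact pow_le_pow_left₀ (by positivity) key 2

set_option maxHeartbeats 1000000 in
lemma zigzag_part1 (n : ℕ) (hn : 1 ≤ n) :
    ptx n ∉ closure (convexHull ℝ (allPts \ {ptx n})) ∧
    pty n ∉ closure (convexHull ℝ (allPts \ {pty n})) := by
  have hN : (0:ℝ) < n := by exact_mod_cast hn
  have hN1 : (1:ℝ) ≤ n := by exact_mod_cast hn
  set t : ℝ := 1/(n:ℝ) with ht
  set δ : ℝ := 1/((n:ℝ)*((n:ℝ)+1)) with hδ
  have hδ0 : 0 < δ := by positivity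
  have ht0 : 0 < t := by positivity
  have hδt : δ ≤ t := one_div_le_one_div_of_le hN (by nlinarith)
  have hδ1 : δ ≤ 1 := by
    rw [hδ, div_le_one (by positivity)]
    nlinarith
  constructor
  · apply sep _ _ (vec3 (2*t) (-1) (-1)) (t^2 - δ^2)
    · rintro q ⟨hq, hqne⟩
      simp only [allPts, Set.mem_iUnion, Set.mem_setOf_eq] at hq
      obtain ⟨j, hj, hqj⟩ := hq
      simp only [Set.mem_insert_iff, Set.mem_singleton_iff] at hqj
      have hJ : (0:ℝ) < j := by exact_mod_cast hj
      have hs0 : (0:ℝ) < 1/(j:ℝ) := by positivity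
      rcases hqj with rfl | rfl
      · have hjn : j ≠ n := by rintro rfl; exact hqne rfl
        have hg : δ^2 ≤ (1/(j:ℝ) - t)^2 := by
          rw [hδ, ht]; exact gap_sq n j hn hj hjn
        rw [ptx_eq, inner3]
        nlinarith [hg]
      · rw [pty_eq, inner3]
        by_cases hjn : j = n
        · subst hjn
          nlinarith
        · have hg : δ^2 ≤ (1/(j:ℝ) - t)^2 := by
            rw [hδ, ht]; exact gap_sq n j hn hj hjn
          nlinarith [hg, hs0]
    · rw [ptx_eq, inner3]
      nlinarith
  · apply sep _ _ (vec3 (2*t) (-1) (δ/2)) (t^2 + (δ/2)*t - δ^2/2)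
    · rintro q ⟨hq, hqne⟩
      simp only [allPts, Set.mem_iUnion, Set.mem_setOf_eq] at hq
      obtain ⟨j, hj, hqj⟩ := hq
      simp only [Set.mem_insert_iff, Set.mem_singleton_iff] at hqj
      have hJ : (0:ℝ) < j := by exact_mod_cast hj
      rcases hqj with rfl | rfl
      · rw [ptx_eq, inner3]
        nlinarith [sq_nonneg (1/(j:ℝ) - t)]
      · have hjn : j ≠ n := by rintro rfl; exact hqne rfl
        have hg : δ^2 ≤ (1/(j:ℝ) - t)^2 := by
          rw [hδ, ht]; exact gap_sq n j hn hj hjn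
        rw [pty_eq, inner3]
        set s : ℝ := 1/(j:ℝ)
        have habs : δ ≤ s - t ∨ δ ≤ -(s - t) := by
          rcases le_or_gt t s with hst | hst
          · left; nlinarith
          · right; nlinarith
        rcases habs with hd | hd
        · have key : 0 ≤ ((s - t) - δ) * ((s - t) + δ/2) :=
            mul_nonneg (by linarith) (by linarith)
          nlinarith [key]
        · have key : 0 ≤ (δ - (s - t)) * (δ/2 - (s - t)) :=
            mul_nonneg (by linarith) (by linarith)
          nlinarith [key]
    · rw [pty_eq, inner3]
      nlinarith

set_option maxHeartbeats 1000000 in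
lemma zigzag_part2 (n : ℕ) (hn : 1 ≤ n) :
    ∃ (u : EuclideanSpace ℝ (Fin 3)) (c : ℝ), u ≠ 0 ∧
      (inner ℝ u (ptx n) : ℝ) = c ∧ (inner ℝ u (pty n) : ℝ) = c ∧
      (inner ℝ u (ptx (n + 1)) : ℝ) = c ∧ (inner ℝ u (pty (n + 1)) : ℝ) = c ∧
      0 < c ∧
      ∀ j : ℕ, 1 ≤ j → j ≠ n → j ≠ n + 1 →
        (inner ℝ u (ptx j) : ℝ) < c ∧ (inner ℝ u (pty j) : ℝ) < c := by
  have hN : (0:ℝ) < n := by exact_mod_cast hn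
  have hN1 : (0:ℝ) < (n:ℝ)+1 := by linarith
  refine ⟨vec3 (1/(n:ℝ) + 1/((n:ℝ)+1)) (-1) 0, (1/(n:ℝ)) * (1/((n:ℝ)+1)),
    ?_, ?_, ?_, ?_, ?_, ?_, ?_⟩
  · intro h
    have h1 := congrArg (fun v : EuclideanSpace ℝ (Fin 3) => v 1) h
    norm_num [vec3, PiLp.toLp_apply] at h1
  · rw [ptx_eq, inner3]; field_simp; ring
  · rw [pty_eq, inner3]; field_simp; ring
  · rw [ptx_eq, inner3]; push_cast; field_simp; ring
  · rw [pty_eq, inner3]; push_cast; field_simp; ring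
  · positivity
  · intro j hj hjn hjn1
    have hJ : (0:ℝ) < j := by exact_mod_cast hj
    have hcase : j < n ∨ n + 1 < j := by omega
    have key : (1/(n:ℝ) + 1/((n:ℝ)+1)) * (1/(j:ℝ)) - (1/(j:ℝ))^2
        < (1/(n:ℝ)) * (1/((n:ℝ)+1)) := by
      rcases hcase with h | h
      · have h1 : 1/(n:ℝ) < 1/(j:ℝ) :=
          one_div_lt_one_div_of_lt hJ (by exact_mod_cast h)
        have h2 : 1/((n:ℝ)+1) < 1/(n:ℝ) :=
          one_div_lt_one_div_of_lt (by positivity) (by linarith)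
        have hk := mul_pos (show (0:ℝ) < 1/(j:ℝ) - 1/(n:ℝ) by linarith)
          (show (0:ℝ) < 1/(j:ℝ) - 1/((n:ℝ)+1) by linarith)
        nlinarith [hk]
      · have h1 : 1/(j:ℝ) < 1/((n:ℝ)+1) := by
          apply one_div_lt_one_div_of_lt (by positivity)
          exact_mod_cast h
        have h2 : 1/((n:ℝ)+1) < 1/(n:ℝ) :=
          one_div_lt_one_div_of_lt (by positivity) (by linarith)
        have hk := mul_pos (show (0:ℝ) < 1/(n:ℝ) - 1/(j:ℝ) by linarith)
          (show (0:ℝ) < 1/((n:ℝ)+1) - 1/(j:ℝ) by linarith)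
        nlinarith [hk]
    constructor
    · rw [ptx_eq, inner3]; nlinarith [key]
    · rw [pty_eq, inner3]; nlinarith [key]

theorem zigzag_points_properties :
    (∀ n : ℕ, 1 ≤ n →
      ptx n ∉ closure (convexHull ℝ (allPts \ {ptx n})) ∧
      pty n ∉ closure (convexHull ℝ (allPts \ {pty n}))) ∧
    (∀ n : ℕ, 1 ≤ n → ∃ (u : EuclideanSpace ℝ (Fin 3)) (c : ℝ), u ≠ 0 ∧
      (inner ℝ u (ptx n) : ℝ) = c ∧ (inner ℝ u (pty n) : ℝ) = c ∧
      (inner ℝ u (ptx (n + 1)) : ℝ) = c ∧ (inner ℝ u (pty (n + 1)) : ℝ) = c ∧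
      0 < c ∧
      ∀ j : ℕ, 1 ≤ j → j ≠ n → j ≠ n + 1 →
        (inner ℝ u (ptx j) : ℝ) < c ∧ (inner ℝ u (pty j) : ℝ) < c) :=
  ⟨zigzag_part1, zigzag_part2⟩
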